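/- The theta graph with poles a and a' and 3 legs of length 3 each is not layered, i.e., it is not isomorphic to any subgraph of an edge layer of a hypercube. -/

import Mathlib

open SimpleGraph

/-- The hypercube graph `Q_n`. -/
def hypercube (n : ℕ) : SimpleGraph (Finset (Fin n)) where
  Adj A B := (A ⊆ B ∧ B.card = A.card + 1) ∨ (B ⊆ A ∧ A.card = B.card + 1)
  symm := ⟨fun A B h => h.symm⟩
  loopless := ⟨by
    intro A h
    rcases h with ⟨-, h⟩ | ⟨-, h⟩ <;> omega⟩

/-- A graph is layered if it is isomorphic to a subgraph of an edge layer of a hypercube. -/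
def IsLayered {V : Type*} (G : SimpleGraph V) : Prop :=
  ∃ (n k : ℕ) (f : V → Finset (Fin n)), Function.Injective f ∧
    (∀ v, (f v).card = k ∨ (f v).card + 1 = k) ∧
    ∀ u v, G.Adj u v → (hypercube n).Adj (f u) (f v)

/-- The theta graph with two poles (\`Sum.inl 0\` and \`Sum.inl 1\`) and \`k\` legs, each a
path of length \`m ≥ 2\` with \`m - 1\` internal vertices: leg \`i\` is
\`pole 0, (i,0), (i,1), …, (i,m-2), pole 1\`. -/
def thetaGraph (k m : ℕ) : SimpleGraph (Fin 2 ⊕ (Fin k × Fin (m - 1))) :=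
  SimpleGraph.fromRel (fun x y =>
    match x, y with
    | Sum.inl p, Sum.inr (_, l) => (p = 0 ∧ l.val = 0) ∨ (p = 1 ∧ l.val = m - 2)
    | Sum.inr (i, l), Sum.inr (i', l') => i = i' ∧ l.val + 1 = l'.val
    | _, _ => False)

lemma adjAX (i : Fin 3) : (thetaGraph 3 3).Adj (Sum.inl 0) (Sum.inr (i, 0)) := by
  simp [thetaGraph]

lemma adjXY (i : Fin 3) : (thetaGraph 3 3).Adj (Sum.inr (i, 0)) (Sum.inr (i, 1)) := by
  simp [thetaGraph]

lemma adjYA (i : Fin 3) : (thetaGraph 3 3).Adj (Sum.inr (i, 1)) (Sum.inl 1) := by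
  simp [thetaGraph]

lemma core {n : ℕ} (A A' : Finset (Fin n)) (X Y : Fin 3 → Finset (Fin n))
    (hXA : ∀ i, A ⊆ X i) (hXc : ∀ i, (X i).card = A.card + 1)
    (hYX : ∀ i, Y i ⊆ X i) (hYc : ∀ i, (X i).card = (Y i).card + 1)
    (hYA' : ∀ i, Y i ⊆ A') (hA'c : ∀ i, A'.card = (Y i).card + 1)
    (hXinj : ∀ i j, X i = X j → i = j)
    (hYA : ∀ i, Y i ≠ A) : False := by
  have hYcard : ∀ i, (Y i).card = A.card := by
    intro i; have := hXc i; have := hYc i; omega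
  have hA'card : A'.card = A.card + 1 := by
    have := hA'c 0; have := hYcard 0; omega
  have hdiff : ∀ i, ∃ p, X i \ A = {p} := by
    intro i
    refine Finset.card_eq_one.mp ?_
    rw [Finset.card_sdiff_of_subset (hXA i)]
    have := hXc i; omega
  choose p hp using hdiff
  have hpX : ∀ i, p i ∈ X i := by
    intro i
    have : p i ∈ X i \ A := by rw [hp i]; exact Finset.mem_singleton_self _
    exact (Finset.mem_sdiff.mp this).1
  have hpA : ∀ i, p i ∉ A := by
    intro i
    have : p i ∈ X i \ A := by rw [hp i]; exact Finset.mem_singleton_self _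
    exact (Finset.mem_sdiff.mp this).2
  have hXeq : ∀ i, X i = insert (p i) A := by
    intro i
    apply Finset.Subset.antisymm
    · intro x hx
      by_cases hxA : x ∈ A
      · exact Finset.mem_insert_of_mem hxA
      · have : x ∈ X i \ A := Finset.mem_sdiff.mpr ⟨hx, hxA⟩
        rw [hp i, Finset.mem_singleton] at this
        rw [this]; exact Finset.mem_insert_self _ _
    · exact Finset.insert_subset (hpX i) (hXA i)
  have hpinj : ∀ i j : Fin 3, p i = p j → i = j := by
    intro i j hij
    apply hXinj
    rw [hXeq i, hXeq j, hij]
  by_cases hAA' : A ⊆ A'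
  · -- Case 1 : every p i is the unique element of A' \ A
    have hpY : ∀ i, p i ∈ Y i := by
      intro i
      by_contra h
      have hsub : Y i ⊆ A := by
        intro x hx
        have := hYX i hx
        rw [hXeq i, Finset.mem_insert] at this
        rcases this with h' | h'
        · exact absurd (h' ▸ hx) h
        · exact h'
      exact hYA i (Finset.eq_of_subset_of_card_le hsub (by rw [hYcard i]))
    have hone : ∃ r, A' \ A = {r} := by
      refine Finset.card_eq_one.mp ?_
      rw [Finset.card_sdiff_of_subset hAA']
      omega
    obtain ⟨r, hr⟩ := hone
    have hpr : ∀ i, p i = r := by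
      intro i
      have : p i ∈ A' \ A := Finset.mem_sdiff.mpr ⟨hYA' i (hpY i), hpA i⟩
      rw [hr, Finset.mem_singleton] at this
      exact this
    have : (0 : Fin 3) = 1 := hpinj 0 1 (by rw [hpr 0, hpr 1])
    simp at this
  · -- Case 2 : some q ∈ A \ A'
    obtain ⟨q, hqA, hqA'⟩ := Finset.not_subset.mp hAA'
    have hYeq : ∀ i, Y i = (insert (p i) A).erase q := by
      intro i
      apply Finset.eq_of_subset_of_card_le
      · intro x hx
        refine Finset.mem_erase.mpr ⟨?_, (hXeq i) ▸ hYX i hx⟩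
        rintro rfl
        exact hqA' (hYA' i hx)
      · rw [Finset.card_erase_of_mem (Finset.mem_insert_of_mem hqA),
          ← hXeq i, hXc i, hYcard i]
        omega
    have hpY : ∀ i, p i ∈ Y i := by
      intro i
      rw [hYeq i]
      refine Finset.mem_erase.mpr ⟨?_, Finset.mem_insert_self _ _⟩
      rintro rfl
      exact hpA i hqA
    have hAerase : A.erase q ⊆ Y 0 := by
      intro x hx
      rw [hYeq 0]
      rcases Finset.mem_erase.mp hx with ⟨hxq, hxA⟩
      exact Finset.mem_erase.mpr ⟨hxq, Finset.mem_insert_of_mem hxA⟩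
    have hT : insert (p 0) (insert (p 1) (insert (p 2) (A.erase q))) ⊆ A' := by
      intro x hx
      simp only [Finset.mem_insert] at hx
      rcases hx with rfl | rfl | rfl | hx
      · exact hYA' 0 (hpY 0)
      · exact hYA' 1 (hpY 1)
      · exact hYA' 2 (hpY 2)
      · exact hYA' 0 (hAerase hx)
    have hcardT : (insert (p 0) (insert (p 1) (insert (p 2) (A.erase q)))).card
        = A.card + 2 := by
      have h2 : p 2 ∉ A.erase q := fun h => hpA 2 (Finset.mem_of_mem_erase h)
      have h1 : p 1 ∉ insert (p 2) (A.erase q) := by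
        simp only [Finset.mem_insert]
        rintro (h | h)
        · exact absurd (hpinj 1 2 h) (by decide)
        · exact hpA 1 (Finset.mem_of_mem_erase h)
      have h0 : p 0 ∉ insert (p 1) (insert (p 2) (A.erase q)) := by
        simp only [Finset.mem_insert]
        rintro (h | h | h)
        · exact absurd (hpinj 0 1 h) (by decide)
        · exact absurd (hpinj 0 2 h) (by decide)
        · exact hpA 0 (Finset.mem_of_mem_erase h)
      rw [Finset.card_insert_of_notMem h0, Finset.card_insert_of_notMem h1,
        Finset.card_insert_of_notMem h2, Finset.card_erase_of_mem hqA]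
      have : 1 ≤ A.card := Finset.card_pos.mpr ⟨q, hqA⟩
      omega
    have := Finset.card_le_card hT
    rw [hcardT, hA'card] at this
    omega

/-- The theta graph with 3 legs of length 3 each is not layered. -/
theorem theta_3_3_not_layered : ¬ IsLayered (thetaGraph 3 3) := by
  rintro ⟨n, k, f, hinj, hcard, hadj⟩
  set a := f (Sum.inl 0) with ha_def
  set a' := f (Sum.inl 1) with ha'_def
  set x : Fin 3 → Finset (Fin n) := fun i => f (Sum.inr (i, 0)) with hx_def
  set y : Fin 3 → Finset (Fin n) := fun i => f (Sum.inr (i, 1)) with hy_def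
  have H1 : ∀ i, (a ⊆ x i ∧ (x i).card = a.card + 1) ∨
      (x i ⊆ a ∧ a.card = (x i).card + 1) := fun i => hadj _ _ (adjAX i)
  have H2 : ∀ i, (x i ⊆ y i ∧ (y i).card = (x i).card + 1) ∨
      (y i ⊆ x i ∧ (x i).card = (y i).card + 1) := fun i => hadj _ _ (adjXY i)
  have H3 : ∀ i, (y i ⊆ a' ∧ a'.card = (y i).card + 1) ∨
      (a' ⊆ y i ∧ (y i).card = a'.card + 1) := fun i => hadj _ _ (adjYA i)
  have hca : a.card = k ∨ a.card + 1 = k := hcard (Sum.inl 0)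
  have hca' : a'.card = k ∨ a'.card + 1 = k := hcard (Sum.inl 1)
  have hcx : ∀ i, (x i).card = k ∨ (x i).card + 1 = k := fun i => hcard (Sum.inr (i, 0))
  have hcy : ∀ i, (y i).card = k ∨ (y i).card + 1 = k := fun i => hcard (Sum.inr (i, 1))
  have hxinj : ∀ i j : Fin 3, x i = x j → i = j := by
    intro i j h
    have := hinj h
    simpa using this
  have hyinj : ∀ i j : Fin 3, y i = y j → i = j := by
    intro i j h
    have := hinj h
    simpa using this
  have hyne_a : ∀ i, y i ≠ a := by
    intro i h
    have := hinj h
    simp at this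
  have hxne_a' : ∀ i, x i ≠ a' := by
    intro i h
    have := hinj h
    simp at this
  rcases hca with hka | hka
  · -- a is on the upper level: apply core with A = a', A' = a, X = y, Y = x
    have hx' : ∀ i, x i ⊆ a ∧ a.card = (x i).card + 1 := by
      intro i
      rcases H1 i with ⟨h1, h2⟩ | h
      · exfalso; rcases hcx i with h | h <;> omega
      · exact h
    have hy' : ∀ i, x i ⊆ y i ∧ (y i).card = (x i).card + 1 := by
      intro i
      rcases H2 i with h | ⟨h1, h2⟩
      · exact h
      · exfalso
        have := (hx' i).2
        rcases hcy i with h | h <;> omega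
    have ha'' : ∀ i, a' ⊆ y i ∧ (y i).card = a'.card + 1 := by
      intro i
      rcases H3 i with ⟨h1, h2⟩ | h
      · exfalso
        have := (hx' i).2
        have := (hy' i).2
        rcases hca' with h | h <;> omega
      · exact h
    exact core a' a y x (fun i => (ha'' i).1) (fun i => (ha'' i).2)
      (fun i => (hy' i).1) (fun i => (hy' i).2)
      (fun i => (hx' i).1) (fun i => (hx' i).2)
      hyinj hxne_a'
  · -- a is on the lower level: apply core with A = a, A' = a', X = x, Y = y
    have hx' : ∀ i, a ⊆ x i ∧ (x i).card = a.card + 1 := by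
      intro i
      rcases H1 i with h | ⟨h1, h2⟩
      · exact h
      · exfalso; rcases hcx i with h | h <;> omega
    have hy' : ∀ i, y i ⊆ x i ∧ (x i).card = (y i).card + 1 := by
      intro i
      rcases H2 i with ⟨h1, h2⟩ | h
      · exfalso
        have := (hx' i).2
        rcases hcy i with h | h <;> omega
      · exact h
    have ha'' : ∀ i, y i ⊆ a' ∧ a'.card = (y i).card + 1 := by
      intro i
      rcases H3 i with h | ⟨h1, h2⟩
      · exact h
      · exfalso
        have := (hx' i).2
        have := (hy' i).2
        rcases hca' with h | h <;> omega
    exact core a a' x y (fun i => (hx' i).1) (fun i => (hx' i).2)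
      (fun i => (hy' i).1) (fun i => (hy' i).2)
      (fun i => (ha'' i).1) (fun i => (ha'' i).2)
      hxinj hyne_a
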